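/- The composition of the strict approximation order with the term equivalence on either side is contained in the strict order: >ₖ · ≈ ⊆ >ₖ and ≈ · >ₖ ⊆ >ₖ. -/

import Mathlib

inductive Term (F V : Type) : Type
  | var : V → Term F V
  | fn : F → List (Term F V) → Term F V

namespace Term
variable {F V : Type}

mutual
  def size : Term F V → ℕ
    | .var _ => 1
    | .fn _ ts => 1 + sizeList ts
  def sizeList : List (Term F V) → ℕ
    | [] => 0
    | t :: ts => size t + sizeList ts
end

mutual
  def depth : Term F V → ℕ
    | .var _ => 0
    | .fn _ ts => 1 + depthList ts
  def depthList : List (Term F V) → ℕ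
    | [] => 0
    | t :: ts => max (depth t) (depthList ts)
end

mutual
  def width : Term F V → ℕ
    | .var _ => 1
    | .fn _ [] => 1
    | .fn _ (t :: ts) => max (ts.length + 1) (max (width t) (widthList ts))
  def widthList : List (Term F V) → ℕ
    | [] => 1
    | t :: ts => max (width t) (widthList ts)
end

mutual
  def bnorm : Term F V → ℕ
    | .var _ => 1
    | .fn _ ts => 1 + max ts.length (bnormList ts)
  def bnormList : List (Term F V) → ℕ
    | [] => 0
    | t :: ts => max (bnorm t) (bnormList ts)
end

mutual
  def subst (σ : V → Term F V) : Term F V → Term F V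
    | .var x => σ x
    | .fn f ts => .fn f (substList σ ts)
  def substList (σ : V → Term F V) : List (Term F V) → List (Term F V)
    | [] => []
    | t :: ts => subst σ t :: substList σ ts
end

/-- The equivalence on terms induced by an equivalence `eqv` on function symbols:
`s ≈ t` iff `s = t`, or the roots are equivalent and the arguments are pairwise
equivalent up to a permutation. -/
inductive TermEq (eqv : F → F → Prop) : Term F V → Term F V → Prop
  | refl (t) : TermEq eqv t t
  | fn {f g : F} {ss ts : List (Term F V)} (hfg : eqv f g)
      (π : Fin ss.length → Fin ts.length) (hbij : Function.Bijective π)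
      (h : ∀ i, TermEq eqv (ss.get i) (ts.get (π i))) :
      TermEq eqv (.fn f ss) (.fn g ts)

/-- The (reflexive) subterm relation. -/
inductive Subterm : Term F V → Term F V → Prop
  | refl (t) : Subterm t t
  | arg {s t : Term F V} {f : F} {ts : List (Term F V)} :
      t ∈ ts → Subterm s t → Subterm s (.fn f ts)

end Term

/-- Sequences: terms over the signature extended by a fresh variadic symbol `∘`
(represented by `none`). -/
abbrev SeqT (F V : Type) := Term (Option F) V

namespace Term
variable {F V : Type}

/-- The strict precedence induced by a quasi-precedence `qp`. -/
def Precedes (qp : F → F → Prop) (f g : F) : Prop := qp f g ∧ ¬ qp g f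

/-- The equivalence on the extended signature induced by `qp`
(the fresh symbol `∘` is only equivalent to itself). -/
def eqvO (qp : F → F → Prop) : Option F → Option F → Prop :=
  fun a b => match a, b with
  | some f, some g => qp f g ∧ qp g f
  | none, none => True
  | _, _ => False

/-- `{s} ≈^mul N`: the multiset `N` is a singleton equivalent to `s`. -/
def IsEqvSingleton (qp : F → F → Prop) (s : SeqT F V) (N : Multiset (SeqT F V)) : Prop :=
  ∃ u, N = {u} ∧ TermEq (eqvO qp) s u

/-- The auxiliary order `▷ₖˡ` of the approximation of the polynomial path order
on sequences (Definition 1).  The second `ℕ`-index is the depth parameter `l`;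
clauses that descend in `l` conclude at `l+1`. -/
inductive Gpp (qp : F → F → Prop) (k : ℕ) : ℕ → SeqT F V → SeqT F V → Prop
  | sub {l} {h : Option F} {ss : List (SeqT F V)} {si t : SeqT F V} :
      si ∈ ss → Gpp qp k l si t → Gpp qp k l (.fn h ss) t
  | sub_eq {l} {h : Option F} {ss : List (SeqT F V)} {si t : SeqT F V} :
      si ∈ ss → TermEq (eqvO qp) si t → Gpp qp k l (.fn h ss) t
  | prec {l} {f g : F} {ss ts : List (SeqT F V)} :
      Precedes qp f g →
      (∀ t' ∈ ts, Gpp qp k l (.fn (some f) ss) t') →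
      ts.length < k + width (.fn (some f) ss) →
      Gpp qp k (l+1) (.fn (some f) ss) (.fn (some g) ts)
  | seq {l} {f : F} {ss ts : List (SeqT F V)} :
      (∀ t' ∈ ts, Gpp qp k l (.fn (some f) ss) t') →
      ts.length < k + width (.fn (some f) ss) →
      Gpp qp k (l+1) (.fn (some f) ss) (.fn none ts)
  | mult {l} {ss ts : List (SeqT F V)} (N : Fin ss.length → Multiset (SeqT F V)) :
      (ts : Multiset (SeqT F V)) = ∑ i, N i →
      (∃ i, ¬ IsEqvSingleton qp (ss.get i) (N i)) →
      (∀ i, ¬ IsEqvSingleton qp (ss.get i) (N i) → ∀ r ∈ N i, Gpp qp k l (ss.get i) r) →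
      ts.length < k + width (.fn none ss) →
      Gpp qp k l (.fn none ss) (.fn none ts)

/-- The approximation `>ₖˡ` of the polynomial path order on sequences
(Definition 2). -/
inductive Gpop (qp : F → F → Prop) (k : ℕ) : ℕ → SeqT F V → SeqT F V → Prop
  | base {l} {s t : SeqT F V} : Gpp qp k l s t → Gpop qp k l s t
  | sub {l} {h : Option F} {ss : List (SeqT F V)} {si t : SeqT F V} :
      si ∈ ss → Gpop qp k l si t → Gpop qp k l (.fn h ss) t
  | sub_eq {l} {h : Option F} {ss : List (SeqT F V)} {si t : SeqT F V} :
      si ∈ ss → TermEq (eqvO qp) si t → Gpop qp k l (.fn h ss) t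
  | seq {l} {f : F} {ss ts : List (SeqT F V)} (j0 : Fin ts.length) :
      Gpop qp k l (.fn (some f) ss) (ts.get j0) →
      (∀ j : Fin ts.length, j ≠ j0 → Gpp qp k l (.fn (some f) ss) (ts.get j)) →
      ts.length < k + width (.fn (some f) ss) →
      Gpop qp k (l+1) (.fn (some f) ss) (.fn none ts)
  | eqv {l} {f g : F} {ss ts : List (SeqT F V)} :
      qp f g → qp g f →
      Gpop qp k l (.fn none ss) (.fn none ts) →
      Gpop qp k l (.fn (some f) ss) (.fn (some g) ts)
  | mult {l} {ss ts : List (SeqT F V)} (N : Fin ss.length → Multiset (SeqT F V)) :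
      (ts : Multiset (SeqT F V)) = ∑ i, N i →
      (∃ i, ¬ IsEqvSingleton qp (ss.get i) (N i)) →
      (∀ i, ¬ IsEqvSingleton qp (ss.get i) (N i) → ∀ r ∈ N i, Gpop qp k l (ss.get i) r) →
      ts.length < k + width (.fn none ss) →
      Gpop qp k l (.fn none ss) (.fn none ts)

end Term

open Term

section Helpers

variable {F V : Type} {qp : F → F → Prop}

lemma eqvO_symm : ∀ {a b : Option F}, eqvO qp a b → eqvO qp b a
  | some _, some _, h => ⟨h.2, h.1⟩
  | none, none, _ => trivial

lemma eqvO_trans (htrans : Transitive qp) :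
    ∀ {a b c : Option F}, eqvO qp a b → eqvO qp b c → eqvO qp a c
  | some _, some _, some _, h1, h2 => ⟨htrans h1.1 h2.1, htrans h2.2 h1.2⟩
  | none, none, none, _, _ => trivial

lemma termEq_symm {s t : SeqT F V} (h : TermEq (eqvO qp) s t) : TermEq (eqvO qp) t s := by
  induction h with
  | refl t => exact TermEq.refl t
  | fn hfg π hbij h ih =>
    rename_i f g ss ts
    refine TermEq.fn (eqvO_symm hfg) (fun j => (Equiv.ofBijective π hbij).symm j)
      (Equiv.bijective _) (fun j => ?_)
    have := ih ((Equiv.ofBijective π hbij).symm j)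
    rwa [show π ((Equiv.ofBijective π hbij).symm j) = j from
      (Equiv.ofBijective π hbij).apply_symm_apply j] at this

lemma termEq_trans (htrans : Transitive qp) :
    ∀ {s t : SeqT F V}, TermEq (eqvO qp) s t →
      ∀ u, TermEq (eqvO qp) t u → TermEq (eqvO qp) s u := by
  intro s t h1
  induction h1 with
  | refl t => exact fun u h2 => h2
  | fn hfg π hbij h ih =>
    rename_i f g ss ts
    intro u h2
    cases h2 with
    | refl => exact TermEq.fn hfg π hbij h
    | fn hgh ρ hbij2 h2 =>
      exact TermEq.fn (eqvO_trans htrans hfg hgh) (fun i => ρ (π i)) (hbij2.comp hbij)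
        (fun i => ih i _ (h2 (π i)))

lemma length_eq_of_bij {n m : ℕ} (π : Fin n → Fin m) (hbij : Function.Bijective π) : n = m := by
  simpa using Fintype.card_of_bijective hbij

lemma rel_of_get_bij {α β : Type*} {r : α → β → Prop} {ss : List α} {ts : List β}
    (π : Fin ss.length → Fin ts.length) (hbij : Function.Bijective π)
    (h : ∀ i, r (ss.get i) (ts.get (π i))) : Multiset.Rel r ↑ss ↑ts := by
  have hss : (↑ss : Multiset α) = Finset.univ.val.map ss.get := by
    rw [Fin.univ_val_map, List.ofFn_get]
  have hts : (↑ts : Multiset β) = Finset.univ.val.map ts.get := by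
    rw [Fin.univ_val_map, List.ofFn_get]
  have huniv : (Finset.univ.val : Multiset (Fin ts.length)) = Finset.univ.val.map π := by
    have := Finset.map_univ_equiv (Equiv.ofBijective π hbij).symm
    have h2 := congrArg Finset.val this
    simp only [Finset.map_val] at h2
    calc (Finset.univ.val : Multiset (Fin ts.length))
        = (Finset.univ.val.map (Equiv.ofBijective π hbij).symm).map π := by
          rw [Multiset.map_map]
          refine (Multiset.map_id _).symm.trans (Multiset.map_congr rfl fun x _ => ?_)
          exact ((Equiv.ofBijective π hbij).apply_symm_apply x).symm
      _ = Finset.univ.val.map π := by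
          have h3 : (Finset.univ.val.map (Equiv.ofBijective π hbij).symm
              : Multiset (Fin ss.length)) = Finset.univ.val := by
            exact_mod_cast h2
          rw [h3]
  rw [hss, hts, huniv, Multiset.map_map, Multiset.rel_map]
  exact Multiset.rel_refl_of_refl_on (fun i _ => h i)

lemma rel_sum_decomp {α β ι : Type*} {r : α → β → Prop} (s : Finset ι)
    (M : ι → Multiset α) :
    ∀ {u : Multiset β}, Multiset.Rel r (∑ i ∈ s, M i) u →
      ∃ N : ι → Multiset β, u = ∑ i ∈ s, N i ∧ ∀ i ∈ s, Multiset.Rel r (M i) (N i) := by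
  classical
  induction s using Finset.induction with
  | empty =>
    intro u h
    rw [Finset.sum_empty] at h
    exact ⟨fun _ => 0, by simpa using Multiset.rel_zero_left.mp h, by simp⟩
  | @insert a s ha ih =>
    intro u hu
    rw [Finset.sum_insert ha] at hu
    obtain ⟨u₁, u₂, h₁, h₂, rfl⟩ := Multiset.rel_add_left.mp hu
    obtain ⟨N, rfl, hN⟩ := ih h₂
    refine ⟨Function.update N a u₁, ?_, ?_⟩
    · rw [Finset.sum_insert ha, Function.update_self]
      congr 1
      refine (Finset.sum_congr rfl fun i hi => ?_).symm
      have hia : i ≠ a := fun h => ha (h ▸ hi)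
      rw [Function.update_of_ne hia]
    · intro i hi
      rcases Finset.mem_insert.mp hi with rfl | hi
      · rwa [Function.update_self]
      · have hia : i ≠ a := fun h => ha (h ▸ hi)
        rw [Function.update_of_ne hia]
        exact hN i hi

lemma rel_mem_right {α β : Type*} {r : α → β → Prop} {s : Multiset α} {t : Multiset β}
    (h : Multiset.Rel r s t) {b : β} (hb : b ∈ t) : ∃ a ∈ s, r a b := by
  obtain ⟨a, ha, hr⟩ := Multiset.exists_mem_of_rel_of_mem (Multiset.rel_flip.mpr h) hb
  exact ⟨a, ha, hr⟩

lemma rel_singleton_right' {α β : Type*} {r : α → β → Prop} {s : Multiset α} {b : β}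
    (h : Multiset.Rel r s {b}) : ∃ a, s = {a} ∧ r a b := by
  have hcard : Multiset.card s = 1 := by
    simpa using Multiset.card_eq_card_of_rel h
  obtain ⟨a, rfl⟩ := Multiset.card_eq_one.mp hcard
  obtain ⟨b', hb', hr⟩ := Multiset.exists_mem_of_rel_of_mem h (Multiset.mem_singleton_self a)
  rw [Multiset.mem_singleton] at hb'
  exact ⟨a, rfl, hb' ▸ hr⟩

lemma rel_singleton_left' {α β : Type*} {r : α → β → Prop} {t : Multiset β} {a : α}
    (h : Multiset.Rel r {a} t) : ∃ b, t = {b} ∧ r a b := by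
  obtain ⟨b, hb, hr⟩ := rel_singleton_right' (Multiset.rel_flip.mpr h)
  exact ⟨b, hb, hr⟩

lemma width_fn (f : F) (ss : List (Term F V)) :
    width (Term.fn f ss) = max ss.length (widthList ss) := by
  cases ss with
  | nil => simp [width, widthList]
  | cons t ts =>
    simp [width, widthList]

lemma widthList_eq_fold (l : List (Term F V)) :
    widthList l = (Multiset.map width (↑l : Multiset (Term F V))).fold max 1 := by
  induction l with
  | nil => simp [widthList]
  | cons t ts ih =>
    rw [widthList, ih, ← Multiset.cons_coe, Multiset.map_cons, Multiset.fold_cons_left]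

lemma termEq_width {s t : SeqT F V} (h : TermEq (eqvO qp) s t) : width s = width t := by
  induction h with
  | refl t => rfl
  | fn hfg π hbij h ih =>
    rename_i f g ss ts
    have hlen : ss.length = ts.length := length_eq_of_bij π hbij
    have hrel : Multiset.Rel (fun a b => width a = width b) (↑ss : Multiset (SeqT F V)) (↑ts : Multiset (SeqT F V)) :=
      rel_of_get_bij (r := fun a b => width a = width b) π hbij ih
    have hmap : Multiset.map width (↑ss : Multiset (SeqT F V)) = Multiset.map width (↑ts : Multiset (SeqT F V)) :=
      Multiset.rel_eq.mp ((Multiset.rel_map (p := Eq) (f := width) (g := width)).mpr hrel)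
    rw [width_fn, width_fn, hlen, widthList_eq_fold, widthList_eq_fold, hmap]

lemma isEqvSingleton_congr (htrans : Transitive qp) {s s' : SeqT F V}
    (hss : TermEq (eqvO qp) s s') {N : Multiset (SeqT F V)} :
    IsEqvSingleton qp s N ↔ IsEqvSingleton qp s' N := by
  constructor
  · rintro ⟨u, rfl, hu⟩
    exact ⟨u, rfl, termEq_trans htrans (termEq_symm hss) _ hu⟩
  · rintro ⟨u, rfl, hu⟩
    exact ⟨u, rfl, termEq_trans htrans hss _ hu⟩

lemma not_isEqvSingleton_of_rel (htrans : Transitive qp) {s : SeqT F V}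
    {M M' : Multiset (SeqT F V)} (hrel : Multiset.Rel (TermEq (eqvO qp)) M M')
    (h : ¬ IsEqvSingleton qp s M) : ¬ IsEqvSingleton qp s M' := by
  rintro ⟨u, rfl, hu⟩
  obtain ⟨a, rfl, har⟩ := rel_singleton_right' hrel
  exact h ⟨a, rfl, termEq_trans htrans hu _ (termEq_symm har)⟩

lemma not_isEqvSingleton_of_rel' (htrans : Transitive qp) {s : SeqT F V}
    {M M' : Multiset (SeqT F V)} (hrel : Multiset.Rel (TermEq (eqvO qp)) M M')
    (h : ¬ IsEqvSingleton qp s M') : ¬ IsEqvSingleton qp s M := by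
  rintro ⟨u, rfl, hu⟩
  obtain ⟨b, rfl, hbr⟩ := rel_singleton_left' hrel
  exact h ⟨b, rfl, termEq_trans htrans hu _ hbr⟩

lemma gppR {k : ℕ} (htrans : Transitive qp) :
    ∀ {l : ℕ} {s t : SeqT F V}, Gpp qp k l s t → ∀ u, TermEq (eqvO qp) t u → Gpp qp k l s u := by
  intro l s t h
  induction h with
  | sub hmem hsi ih => exact fun u hu => Gpp.sub hmem (ih u hu)
  | sub_eq hmem heq => exact fun u hu => Gpp.sub_eq hmem (termEq_trans htrans heq u hu)
  | prec hfg hts hlen ih =>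
    rename_i l f g ss ts
    intro u hu
    cases hu with
    | refl => exact Gpp.prec hfg hts hlen
    | fn hg π hbij hargs =>
      rename_i g'' us
      cases g'' with
      | none => exact absurd hg (by simp [eqvO])
      | some g' =>
        have hgg' : qp g g' ∧ qp g' g := hg
        have hlen2 : ts.length = us.length := length_eq_of_bij π hbij
        refine Gpp.prec ⟨htrans hfg.1 hgg'.1, fun hq => hfg.2 (htrans hgg'.1 hq)⟩ ?_
          (hlen2 ▸ hlen)
        intro u' hu'
        obtain ⟨j, hj⟩ := List.get_of_mem hu'
        obtain ⟨i, rfl⟩ := hbij.2 j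
        exact ih (ts.get i) (ts.get_mem i) u' (hj ▸ hargs i)
  | seq hts hlen ih =>
    rename_i l f ss ts
    intro u hu
    cases hu with
    | refl => exact Gpp.seq hts hlen
    | fn hg π hbij hargs =>
      rename_i g'' us
      cases g'' with
      | some g' => exact absurd hg (by simp [eqvO])
      | none =>
        have hlen2 : ts.length = us.length := length_eq_of_bij π hbij
        refine Gpp.seq ?_ (hlen2 ▸ hlen)
        intro u' hu'
        obtain ⟨j, hj⟩ := List.get_of_mem hu'
        obtain ⟨i, rfl⟩ := hbij.2 j
        exact ih (ts.get i) (ts.get_mem i) u' (hj ▸ hargs i)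
  | mult N hsum hex hall hlen ih =>
    rename_i l ss ts
    intro u hu
    cases hu with
    | refl => exact Gpp.mult N hsum hex hall hlen
    | fn hg π hbij hargs =>
      rename_i g'' us
      cases g'' with
      | some g' => exact absurd hg (by simp [eqvO])
      | none =>
        have hrel := rel_of_get_bij (r := TermEq (eqvO qp)) π hbij hargs
        have hlen2 : ts.length = us.length := length_eq_of_bij π hbij
        rw [hsum] at hrel
        obtain ⟨N', husum, hN'⟩ := rel_sum_decomp Finset.univ N hrel
        have hN'i : ∀ i, Multiset.Rel (TermEq (eqvO qp)) (N i) (N' i) :=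
          fun i => hN' i (Finset.mem_univ i)
        refine Gpp.mult N' husum ?_ ?_ (hlen2 ▸ hlen)
        · obtain ⟨i, hi⟩ := hex
          exact ⟨i, not_isEqvSingleton_of_rel htrans (hN'i i) hi⟩
        · intro i hi r hr
          have hNi : ¬ IsEqvSingleton qp (ss.get i) (N i) :=
            not_isEqvSingleton_of_rel' htrans (hN'i i) hi
          obtain ⟨a, ha, har⟩ := rel_mem_right (hN'i i) hr
          exact ih i hNi a ha r har

lemma gppL {k : ℕ} (htrans : Transitive qp) :
    ∀ {l : ℕ} {t u : SeqT F V}, Gpp qp k l t u → ∀ s, TermEq (eqvO qp) s t → Gpp qp k l s u := by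
  intro l t u h
  induction h with
  | sub hmem hsi ih =>
    rename_i l hd ts si u'
    intro s hs
    cases hs with
    | refl => exact Gpp.sub hmem hsi
    | fn hf π hbij hargs =>
      rename_i f'' ss'
      obtain ⟨j, hj⟩ := List.get_of_mem hmem
      obtain ⟨i, rfl⟩ := hbij.2 j
      exact Gpp.sub (ss'.get_mem i) (ih _ (hj ▸ hargs i))
  | sub_eq hmem heq =>
    rename_i l hd ts si u'
    intro s hs
    cases hs with
    | refl => exact Gpp.sub_eq hmem heq
    | fn hf π hbij hargs =>
      rename_i f'' ss'
      obtain ⟨j, hj⟩ := List.get_of_mem hmem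
      obtain ⟨i, rfl⟩ := hbij.2 j
      exact Gpp.sub_eq (ss'.get_mem i)
        (termEq_trans htrans (hj ▸ hargs i) _ heq)
  | prec hfg hts hlen ih =>
    rename_i l f g ss ts
    intro s hs
    cases hs with
    | refl => exact Gpp.prec hfg hts hlen
    | fn hf π hbij hargs =>
      rename_i f'' ss'
      cases f'' with
      | none => exact absurd hf (by simp [eqvO])
      | some f' =>
        have hff : qp f' f ∧ qp f f' := hf
        have hs' : TermEq (eqvO qp) (Term.fn (some f') ss' : SeqT F V) (.fn (some f) ss) :=
          TermEq.fn hf π hbij hargs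
        have hw := termEq_width hs'
        refine Gpp.prec ⟨htrans hff.1 hfg.1, fun hq => hfg.2 (htrans hq hff.1)⟩
          (fun t' ht' => ih t' ht' _ hs') (by rw [hw]; exact hlen)
  | seq hts hlen ih =>
    rename_i l f ss ts
    intro s hs
    cases hs with
    | refl => exact Gpp.seq hts hlen
    | fn hf π hbij hargs =>
      rename_i f'' ss'
      cases f'' with
      | none => exact absurd hf (by simp [eqvO])
      | some f' =>
        have hs' : TermEq (eqvO qp) (Term.fn (some f') ss' : SeqT F V) (.fn (some f) ss) :=
          TermEq.fn hf π hbij hargs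
        have hw := termEq_width hs'
        exact Gpp.seq (fun t' ht' => ih t' ht' _ hs') (by rw [hw]; exact hlen)
  | mult N hsum hex hall hlen ih =>
    rename_i l ss ts
    intro s hs
    cases hs with
    | refl => exact Gpp.mult N hsum hex hall hlen
    | fn hf π hbij hargs =>
      rename_i f'' ss'
      cases f'' with
      | some f' => exact absurd hf (by simp [eqvO])
      | none =>
        have hs' : TermEq (eqvO qp) (Term.fn none ss' : SeqT F V) (.fn none ss) :=
          TermEq.fn hf π hbij hargs
        have hw := termEq_width hs'
        refine Gpp.mult (fun i => N (π i)) ?_ ?_ ?_ (by rw [hw]; exact hlen)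
        · rw [hsum]
          exact (Fintype.sum_bijective π hbij _ _ (fun i => rfl)).symm
        · obtain ⟨j, hj⟩ := hex
          obtain ⟨i, rfl⟩ := hbij.2 j
          exact ⟨i, fun hsg => hj ((isEqvSingleton_congr htrans (hargs i)).mp hsg)⟩
        · intro i hi r hr
          have hni : ¬ IsEqvSingleton qp (ss.get (π i)) (N (π i)) :=
            fun hsg => hi ((isEqvSingleton_congr htrans (hargs i)).mpr hsg)
          exact ih (π i) hni r hr _ (hargs i)

lemma gpopR {k : ℕ} (htrans : Transitive qp) :
    ∀ {l : ℕ} {s t : SeqT F V}, Gpop qp k l s t → ∀ u, TermEq (eqvO qp) t u → Gpop qp k l s u := by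
  intro l s t h
  induction h with
  | base h => exact fun u hu => Gpop.base (gppR htrans h u hu)
  | sub hmem hsi ih => exact fun u hu => Gpop.sub hmem (ih u hu)
  | sub_eq hmem heq => exact fun u hu => Gpop.sub_eq hmem (termEq_trans htrans heq u hu)
  | seq j0 hj0 hrest hlen ihj0 =>
    rename_i l f ss ts
    intro u hu
    cases hu with
    | refl => exact Gpop.seq j0 hj0 hrest hlen
    | fn hg π hbij hargs =>
      rename_i g'' us
      cases g'' with
      | some g' => exact absurd hg (by simp [eqvO])
      | none =>
        have hlen2 : ts.length = us.length := length_eq_of_bij π hbij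
        refine Gpop.seq (π j0) (ihj0 _ (hargs j0)) ?_ (hlen2 ▸ hlen)
        intro j hj
        obtain ⟨i, rfl⟩ := hbij.2 j
        have hne : i ≠ j0 := fun h => hj (by rw [h])
        exact gppR htrans (hrest i hne) _ (hargs i)
  | eqv hfg hgf hin ih =>
    rename_i l f g ss ts
    intro u hu
    cases hu with
    | refl => exact Gpop.eqv hfg hgf hin
    | fn hg π hbij hargs =>
      rename_i g'' us
      cases g'' with
      | none => exact absurd hg (by simp [eqvO])
      | some g' =>
        have hgg' : qp g g' ∧ qp g' g := hg
        have hte : TermEq (eqvO qp) (Term.fn none ts : SeqT F V) (.fn none us) :=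
          TermEq.fn trivial π hbij hargs
        exact Gpop.eqv (htrans hfg hgg'.1) (htrans hgg'.2 hgf) (ih _ hte)
  | mult N hsum hex hall hlen ih =>
    rename_i l ss ts
    intro u hu
    cases hu with
    | refl => exact Gpop.mult N hsum hex hall hlen
    | fn hg π hbij hargs =>
      rename_i g'' us
      cases g'' with
      | some g' => exact absurd hg (by simp [eqvO])
      | none =>
        have hrel := rel_of_get_bij (r := TermEq (eqvO qp)) π hbij hargs
        have hlen2 : ts.length = us.length := length_eq_of_bij π hbij
        rw [hsum] at hrel
        obtain ⟨N', husum, hN'⟩ := rel_sum_decomp Finset.univ N hrel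
        have hN'i : ∀ i, Multiset.Rel (TermEq (eqvO qp)) (N i) (N' i) :=
          fun i => hN' i (Finset.mem_univ i)
        refine Gpop.mult N' husum ?_ ?_ (hlen2 ▸ hlen)
        · obtain ⟨i, hi⟩ := hex
          exact ⟨i, not_isEqvSingleton_of_rel htrans (hN'i i) hi⟩
        · intro i hi r hr
          have hNi : ¬ IsEqvSingleton qp (ss.get i) (N i) :=
            not_isEqvSingleton_of_rel' htrans (hN'i i) hi
          obtain ⟨a, ha, har⟩ := rel_mem_right (hN'i i) hr
          exact ih i hNi a ha r har

lemma gpopL {k : ℕ} (htrans : Transitive qp) :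
    ∀ {l : ℕ} {t u : SeqT F V}, Gpop qp k l t u → ∀ s, TermEq (eqvO qp) s t → Gpop qp k l s u := by
  intro l t u h
  induction h with
  | base h => exact fun s hs => Gpop.base (gppL htrans h s hs)
  | sub hmem hsi ih =>
    rename_i l hd ts si u'
    intro s hs
    cases hs with
    | refl => exact Gpop.sub hmem hsi
    | fn hf π hbij hargs =>
      rename_i f'' ss'
      obtain ⟨j, hj⟩ := List.get_of_mem hmem
      obtain ⟨i, rfl⟩ := hbij.2 j
      exact Gpop.sub (ss'.get_mem i) (ih _ (hj ▸ hargs i))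
  | sub_eq hmem heq =>
    rename_i l hd ts si u'
    intro s hs
    cases hs with
    | refl => exact Gpop.sub_eq hmem heq
    | fn hf π hbij hargs =>
      rename_i f'' ss'
      obtain ⟨j, hj⟩ := List.get_of_mem hmem
      obtain ⟨i, rfl⟩ := hbij.2 j
      exact Gpop.sub_eq (ss'.get_mem i)
        (termEq_trans htrans (hj ▸ hargs i) _ heq)
  | seq j0 hj0 hrest hlen ihj0 =>
    rename_i l f ss ts
    intro s hs
    cases hs with
    | refl => exact Gpop.seq j0 hj0 hrest hlen
    | fn hf π hbij hargs =>
      rename_i f'' ss'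
      cases f'' with
      | none => exact absurd hf (by simp [eqvO])
      | some f' =>
        have hs' : TermEq (eqvO qp) (Term.fn (some f') ss' : SeqT F V) (.fn (some f) ss) :=
          TermEq.fn hf π hbij hargs
        have hw := termEq_width hs'
        exact Gpop.seq j0 (ihj0 _ hs') (fun j hj => gppL htrans (hrest j hj) _ hs')
          (by rw [hw]; exact hlen)
  | eqv hfg hgf hin ih =>
    rename_i l f g ss ts
    intro s hs
    cases hs with
    | refl => exact Gpop.eqv hfg hgf hin
    | fn hf π hbij hargs =>
      rename_i f'' ss'
      cases f'' with
      | none => exact absurd hf (by simp [eqvO])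
      | some f' =>
        have hff : qp f' f ∧ qp f f' := hf
        have hin' : Gpop qp k _ (Term.fn none ss' : SeqT F V) (.fn none ts) :=
          ih _ (TermEq.fn trivial π hbij hargs)
        exact Gpop.eqv (htrans hff.1 hfg) (htrans hgf hff.2) hin'
  | mult N hsum hex hall hlen ih =>
    rename_i l ss ts
    intro s hs
    cases hs with
    | refl => exact Gpop.mult N hsum hex hall hlen
    | fn hf π hbij hargs =>
      rename_i f'' ss'
      cases f'' with
      | some f' => exact absurd hf (by simp [eqvO])
      | none =>
        have hs' : TermEq (eqvO qp) (Term.fn none ss' : SeqT F V) (.fn none ss) :=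
          TermEq.fn hf π hbij hargs
        have hw := termEq_width hs'
        refine Gpop.mult (fun i => N (π i)) ?_ ?_ ?_ (by rw [hw]; exact hlen)
        · rw [hsum]
          exact (Fintype.sum_bijective π hbij _ _ (fun i => rfl)).symm
        · obtain ⟨j, hj⟩ := hex
          obtain ⟨i, rfl⟩ := hbij.2 j
          exact ⟨i, fun hsg => hj ((isEqvSingleton_congr htrans (hargs i)).mp hsg)⟩
        · intro i hi r hr
          have hni : ¬ IsEqvSingleton qp (ss.get (π i)) (N (π i)) :=
            fun hsg => hi ((isEqvSingleton_congr htrans (hargs i)).mpr hsg)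
          exact ih (π i) hni r hr _ (hargs i)

end Helpers


/-- Composing the strict approximation order `>ₖ` with the term equivalence `≈`
on either side stays inside the strict order:
`>ₖ · ≈ ⊆ >ₖ` and `≈ · >ₖ ⊆ >ₖ`. -/
theorem gpop_compat_termEq {F V : Type} (qp : F → F → Prop)
    (hrefl : Reflexive qp) (htrans : Transitive qp) (k : ℕ) :
    (∀ s t u : SeqT F V, Gpop qp k k s t → TermEq (eqvO qp) t u → Gpop qp k k s u) ∧
    (∀ s t u : SeqT F V, TermEq (eqvO qp) s t → Gpop qp k k t u → Gpop qp k k s u) := by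
  exact ⟨fun s t u h he => gpopR htrans h u he, fun s t u he h => gpopL htrans h s he⟩
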